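/- Given a probability measure Q on ℕ with Q(l) ≥ Q(l+1) for all l, and α ∈ (0,1), define Q_N(1) = 1 − \sum_{k=2}^{⌊N^α⌋} ⌊N·Q(k)⌋/N, Q_N(k) = ⌊N·Q(k)⌋/N for 2 ≤ k ≤ ⌊N^α⌋, and Q_N(k) = 0 otherwise. Then Q_N is a non-increasing probability function on ℕ with values in {0, 1/N, ..., 1}, and \sum_{k=1}^∞ |Q(k) − Q_N(k)| ≤ 2(N^{α−1} + \sum_{k > ⌊N^α⌋} Q(k)); in particular Q_N → Q in ℓ¹ as N → ∞. -/

import Mathlib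

open Real Filter

/-- Discretization of a non-increasing probability function on `ℕ = {1,2,...}`
(here `Q k` for `k ≥ 1`, with `Q` summing to 1): the discretized `Q_N` is again
a non-increasing probability function with values in `{0, 1/N, ..., 1}`, satisfies
the `ℓ¹`-bound `∑_k |Q(k) - Q_N(k)| ≤ 2(N^{α-1} + ∑_{k > ⌊N^α⌋} Q(k))`, and hence
`Q_N → Q` in `ℓ¹` as `N → ∞`. -/
theorem discretization_of_shape_measure (Q : ℕ → ℝ) (α : ℝ) (hα0 : 0 < α) (hα1 : α < 1)
    (hQnn : ∀ k, 1 ≤ k → 0 ≤ Q k)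
    (hQmono : ∀ k, 1 ≤ k → Q (k + 1) ≤ Q k)
    (hQsummable : Summable (fun k : ℕ => Q (k + 1)))
    (hQsum : ∑' k : ℕ, Q (k + 1) = 1)
    (QN : ℕ → ℕ → ℝ)
    (hQN : ∀ N k : ℕ, QN N k =
      if k = 1 then
        1 - ∑ j ∈ Finset.Icc 2 (⌊(N : ℝ) ^ α⌋₊), (⌊(N : ℝ) * Q j⌋₊ : ℝ) / N
      else if 2 ≤ k ∧ k ≤ ⌊(N : ℝ) ^ α⌋₊ then (⌊(N : ℝ) * Q k⌋₊ : ℝ) / N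
      else 0) :
    (∀ N : ℕ, 1 ≤ N →
      (∀ k, 1 ≤ k → QN N (k + 1) ≤ QN N k) ∧
      (∀ k, 1 ≤ k → ∃ i : ℕ, i ≤ N ∧ QN N k = (i : ℝ) / N) ∧
      (∑' k : ℕ, QN N (k + 1)) = 1 ∧
      (∑' k : ℕ, |Q (k + 1) - QN N (k + 1)|)
        ≤ 2 * ((N : ℝ) ^ (α - 1) + ∑' k : ℕ, Q (k + ⌊(N : ℝ) ^ α⌋₊ + 1))) ∧
    Tendsto (fun N : ℕ => ∑' k : ℕ, |Q (k + 1) - QN N (k + 1)|) atTop (nhds 0) := by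
  -- global facts about Q
  have hQ2summable : Summable (fun k : ℕ => Q (k + 2)) := by
    have h := (summable_nat_add_iff (f := fun k : ℕ => Q (k + 1)) 1).2 hQsummable
    exact h.congr fun k => by norm_num
  have hsplit : Q 1 + ∑' k : ℕ, Q (k + 2) = 1 := by
    have h := Summable.tsum_eq_zero_add hQsummable
    rw [hQsum] at h
    have h2 : (∑' b : ℕ, Q (b + 1 + 1)) = ∑' k : ℕ, Q (k + 2) := by
      exact tsum_congr fun b => by norm_num
    rw [h2] at h
    norm_num at h
    linarith
  have htail2 : 0 ≤ ∑' k : ℕ, Q (k + 2) := tsum_nonneg fun k => hQnn _ (by omega)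
  have hQ1le : Q 1 ≤ 1 := by linarith
  have hle1 : ∀ n : ℕ, Q (n + 1) ≤ Q 1 := by
    intro n
    induction n with
    | zero => exact le_refl _
    | succ n ih => exact le_trans (hQmono (n + 1) (by omega)) ih
  have hQle1 : ∀ k, 1 ≤ k → Q k ≤ 1 := by
    intro k hk
    obtain ⟨n, rfl⟩ : ∃ n, k = n + 1 := ⟨k - 1, by omega⟩
    exact le_trans (hle1 n) hQ1le
  have key : ∀ N : ℕ, 1 ≤ N →
      (∀ k, 1 ≤ k → QN N (k + 1) ≤ QN N k) ∧
      (∀ k, 1 ≤ k → ∃ i : ℕ, i ≤ N ∧ QN N k = (i : ℝ) / N) ∧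
      (∑' k : ℕ, QN N (k + 1)) = 1 ∧
      (∑' k : ℕ, |Q (k + 1) - QN N (k + 1)|)
        ≤ 2 * ((N : ℝ) ^ (α - 1) + ∑' k : ℕ, Q (k + ⌊(N : ℝ) ^ α⌋₊ + 1)) := by
    intro N hN
    set M := ⌊(N : ℝ) ^ α⌋₊ with hMdef
    have hN0 : (0 : ℝ) < N := by exact_mod_cast hN
    have hNα1 : (1 : ℝ) ≤ (N : ℝ) ^ α := by
      calc (1 : ℝ) = 1 ^ α := (Real.one_rpow α).symm
        _ ≤ (N : ℝ) ^ α := Real.rpow_le_rpow (by norm_num) (by exact_mod_cast hN) hα0.le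
    have hM1 : 1 ≤ M := Nat.le_floor (by exact_mod_cast hNα1)
    obtain ⟨M', hM'⟩ : ∃ M', M = M' + 1 := ⟨M - 1, by omega⟩
    have hQN1 : QN N 1 = 1 - ∑ j ∈ Finset.Icc 2 M, (⌊(N : ℝ) * Q j⌋₊ : ℝ) / N := by
      rw [hQN]; simp [hMdef]
    have hQNmid : ∀ k, 2 ≤ k → k ≤ M → QN N k = (⌊(N : ℝ) * Q k⌋₊ : ℝ) / N := by
      intro k h2 hkM
      rw [hQN, if_neg (by omega), if_pos ⟨h2, hkM⟩]
    have hQNtop : ∀ k, 2 ≤ k → M < k → QN N k = 0 := by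
      intro k h2 hkM
      rw [hQN, if_neg (by omega), if_neg (by omega)]
    have hreidx : ∀ g : ℕ → ℝ,
        ∑ j ∈ Finset.Icc 2 M, g j = ∑ k ∈ Finset.range M', g (k + 2) := by
      intro g
      rw [hM', ← Finset.Ico_add_one_right_eq_Icc, Finset.sum_Ico_eq_sum_range]
      have h : M' + 1 + 1 - 2 = M' := by omega
      rw [h]
      exact Finset.sum_congr rfl fun k _ => by rw [add_comm]
    have hfloor_div_le : ∀ j, 1 ≤ j → (⌊(N : ℝ) * Q j⌋₊ : ℝ) / N ≤ Q j := by
      intro j hj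
      rw [div_le_iff₀ hN0]
      calc (⌊(N : ℝ) * Q j⌋₊ : ℝ) ≤ (N : ℝ) * Q j :=
            Nat.floor_le (mul_nonneg hN0.le (hQnn j hj))
        _ = Q j * N := mul_comm _ _
    have hgap : ∀ j, 1 ≤ j → Q j - (⌊(N : ℝ) * Q j⌋₊ : ℝ) / N ≤ 1 / N := by
      intro j hj
      have h := (Nat.lt_floor_add_one ((N : ℝ) * Q j)).le
      rw [sub_le_iff_le_add, ← add_div, le_div_iff₀ hN0]
      nlinarith
    have hS_le : (∑ j ∈ Finset.Icc 2 M, (⌊(N : ℝ) * Q j⌋₊ : ℝ) / N) ≤ 1 - Q 1 := by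
      have h1 : (∑ j ∈ Finset.Icc 2 M, (⌊(N : ℝ) * Q j⌋₊ : ℝ) / N)
          ≤ ∑ j ∈ Finset.Icc 2 M, Q j := by
        refine Finset.sum_le_sum fun j hj => hfloor_div_le j ?_
        have := (Finset.mem_Icc.1 hj).1; omega
      have h2 : ∑ j ∈ Finset.Icc 2 M, Q j = ∑ k ∈ Finset.range M', Q (k + 2) := hreidx Q
      have h3 : ∑ k ∈ Finset.range M', Q (k + 2) ≤ ∑' k : ℕ, Q (k + 2) :=
        Summable.sum_le_tsum _ (fun i _ => hQnn _ (by omega)) hQ2summable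
      linarith
    have hQ1_le : Q 1 ≤ QN N 1 := by rw [hQN1]; linarith
    have hQN1_nonneg : 0 ≤ QN N 1 := le_trans (hQnn 1 le_rfl) hQ1_le
    -- part 1: monotonicity
    have part1 : ∀ k, 1 ≤ k → QN N (k + 1) ≤ QN N k := by
      intro k hk
      rcases eq_or_lt_of_le hk with h | h
      · -- k = 1
        have hk1 : k = 1 := h.symm
        subst hk1
        by_cases h2 : 2 ≤ M
        · rw [hQNmid 2 le_rfl h2]
          exact le_trans (hfloor_div_le 2 (by omega))
            (le_trans (hQmono 1 le_rfl) hQ1_le)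
        · rw [hQNtop 2 le_rfl (by omega)]
          exact hQN1_nonneg
      · have h2 : 2 ≤ k := h
        by_cases hk1 : k + 1 ≤ M
        · rw [hQNmid (k + 1) (by omega) hk1, hQNmid k h2 (by omega)]
          have hfl : (⌊(N : ℝ) * Q (k + 1)⌋₊ : ℝ) ≤ (⌊(N : ℝ) * Q k⌋₊ : ℝ) := by
            exact_mod_cast Nat.floor_le_floor
              (mul_le_mul_of_nonneg_left (hQmono k (by omega)) hN0.le)
          exact div_le_div_of_nonneg_right hfl hN0.le |>.trans_eq rfl
        · by_cases hk2 : k ≤ M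
          · rw [hQNtop (k + 1) (by omega) (by omega), hQNmid k h2 hk2]
            positivity
          · rw [hQNtop (k + 1) (by omega) (by omega), hQNtop k h2 (by omega)]
    -- part 2: values in {0, 1/N, ..., 1}
    have part2 : ∀ k, 1 ≤ k → ∃ i : ℕ, i ≤ N ∧ QN N k = (i : ℝ) / N := by
      intro k hk
      rcases eq_or_lt_of_le hk with h | h
      · -- k = 1
        have hk1 : k = 1 := h.symm
        subst hk1
        set m : ℕ := ∑ j ∈ Finset.Icc 2 M, ⌊(N : ℝ) * Q j⌋₊ with hm
        have hcast : (∑ j ∈ Finset.Icc 2 M, (⌊(N : ℝ) * Q j⌋₊ : ℝ) / N) = (m : ℝ) / N := by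
          rw [hm]; push_cast; rw [Finset.sum_div]
        have hmN : m ≤ N := by
          have h1 : (m : ℝ) / N ≤ 1 - Q 1 := hcast ▸ hS_le
          have hQ1nn := hQnn 1 le_rfl
          have h2 : (m : ℝ) ≤ N := by
            rw [div_le_iff₀ hN0] at h1; nlinarith
          exact_mod_cast h2
        refine ⟨N - m, Nat.sub_le _ _, ?_⟩
        rw [hQN1, hcast, Nat.cast_sub hmN, sub_div, div_self hN0.ne']
      · have h2 : 2 ≤ k := h
        by_cases hkM : k ≤ M
        · refine ⟨⌊(N : ℝ) * Q k⌋₊, ?_, hQNmid k h2 hkM⟩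
          have hle : (N : ℝ) * Q k ≤ (N : ℝ) := by
            nlinarith [hQle1 k (by omega), hQnn k (by omega)]
          calc ⌊(N : ℝ) * Q k⌋₊ ≤ ⌊(N : ℝ)⌋₊ := Nat.floor_le_floor hle
            _ = N := Nat.floor_natCast N
        · exact ⟨0, Nat.zero_le _, by rw [hQNtop k h2 (by omega)]; simp⟩
    -- part 3: sums to 1
    have part3 : (∑' k : ℕ, QN N (k + 1)) = 1 := by
      have hzero : ∀ b ∉ Finset.range M, QN N (b + 1) = 0 := by
        intro b hb
        rw [Finset.mem_range, not_lt] at hb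
        exact hQNtop (b + 1) (by omega) (by omega)
      rw [tsum_eq_sum hzero, hM', Finset.sum_range_succ']
      have h1 : ∀ i ∈ Finset.range M',
          QN N (i + 1 + 1) = (⌊(N : ℝ) * Q (i + 2)⌋₊ : ℝ) / N := by
        intro i hi
        rw [Finset.mem_range] at hi
        have : i + 1 + 1 = i + 2 := by omega
        rw [this]
        exact hQNmid (i + 2) (by omega) (by omega)
      rw [Finset.sum_congr rfl h1]
      have h0 : QN N (0 + 1) = QN N 1 := by norm_num
      rw [h0, hQN1, hreidx (fun j => (⌊(N : ℝ) * Q j⌋₊ : ℝ) / N)]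
      ring
    -- part 4: ℓ¹ bound
    have part4 : (∑' k : ℕ, |Q (k + 1) - QN N (k + 1)|)
        ≤ 2 * ((N : ℝ) ^ (α - 1) + ∑' k : ℕ, Q (k + M + 1)) := by
      set T := ∑' k : ℕ, Q (k + M + 1) with hT
      have hTeq : T = ∑' k : ℕ, Q (k + M' + 2) := by
        rw [hT]; exact tsum_congr fun k => by congr 1; omega
      have htails : (∑ i ∈ Finset.range M', Q (i + 2)) + (∑' k : ℕ, Q (k + M' + 2))
          = ∑' k : ℕ, Q (k + 2) := by
        have h := Summable.sum_add_tsum_nat_add (f := fun k : ℕ => Q (k + 2)) M' hQ2summable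
        have h2 : (∑' i : ℕ, Q (i + M' + 2)) = ∑' k : ℕ, Q (k + M' + 2) := rfl
        rw [← h2]; exact h
      have hT0 : 0 ≤ T := tsum_nonneg fun k => hQnn _ (by omega)
      have hgtail : ∀ k, M ≤ k → |Q (k + 1) - QN N (k + 1)| = Q (k + 1) := by
        intro k hk
        rw [hQNtop (k + 1) (by omega) (by omega), sub_zero,
          abs_of_nonneg (hQnn _ (by omega))]
      have hsumg : Summable (fun k : ℕ => |Q (k + 1) - QN N (k + 1)|) := by
        apply (summable_nat_add_iff M).1
        have h1 : Summable (fun n : ℕ => Q (n + M + 1)) :=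
          (summable_nat_add_iff (f := fun k : ℕ => Q (k + 1)) M).2 hQsummable
        exact h1.congr fun n => (hgtail (n + M) (Nat.le_add_left M n)).symm
      have hsplitg := (Summable.sum_add_tsum_nat_add
        (f := fun k : ℕ => |Q (k + 1) - QN N (k + 1)|) M hsumg).symm
      have htailg : (∑' i : ℕ, |Q (i + M + 1) - QN N (i + M + 1)|) = T := by
        rw [hT]; exact tsum_congr fun i => hgtail (i + M) (Nat.le_add_left M i)
      -- bound head term
      have hg0 : |Q 1 - QN N 1| ≤ (M' : ℝ) / N + T := by
        rw [abs_of_nonpos (by linarith : Q 1 - QN N 1 ≤ 0), hQN1]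
        have e1 : (∑ j ∈ Finset.Icc 2 M, (⌊(N : ℝ) * Q j⌋₊ : ℝ) / N)
            = ∑ k ∈ Finset.range M', (⌊(N : ℝ) * Q (k + 2)⌋₊ : ℝ) / N :=
          hreidx _
        have e2 : ∑ k ∈ Finset.range M', (Q (k + 2) - (⌊(N : ℝ) * Q (k + 2)⌋₊ : ℝ) / N)
            ≤ ∑ _k ∈ Finset.range M', (1 / N : ℝ) :=
          Finset.sum_le_sum fun k _ => hgap (k + 2) (by omega)
        have e3 : ∑ _k ∈ Finset.range M', (1 / N : ℝ) = (M' : ℝ) / N := by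
          rw [Finset.sum_const, Finset.card_range, nsmul_eq_mul]; ring
        have e6 : (∑ k ∈ Finset.range M', Q (k + 2))
            - (∑ k ∈ Finset.range M', (⌊(N : ℝ) * Q (k + 2)⌋₊ : ℝ) / N)
            ≤ (M' : ℝ) / N := by
          rw [← Finset.sum_sub_distrib]; linarith
        linarith [hTeq, htails, hsplit]
      have hmid : ∀ i ∈ Finset.range M', |Q (i + 1 + 1) - QN N (i + 1 + 1)| ≤ 1 / N := by
        intro i hi
        rw [Finset.mem_range] at hi
        have h12 : i + 1 + 1 = i + 2 := by omega
        rw [h12, hQNmid (i + 2) (by omega) (by omega),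
          abs_of_nonneg (sub_nonneg.2 (hfloor_div_le (i + 2) (by omega)))]
        exact hgap (i + 2) (by omega)
      have hhead : (∑ k ∈ Finset.range M, |Q (k + 1) - QN N (k + 1)|)
          ≤ (M' : ℝ) / N + T + (M' : ℝ) / N := by
        rw [hM', Finset.sum_range_succ']
        have h1 : (∑ i ∈ Finset.range M', |Q (i + 1 + 1) - QN N (i + 1 + 1)|)
            ≤ ∑ _i ∈ Finset.range M', (1 / N : ℝ) := Finset.sum_le_sum hmid
        have h2 : ∑ _i ∈ Finset.range M', (1 / N : ℝ) = (M' : ℝ) / N := by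
          rw [Finset.sum_const, Finset.card_range, nsmul_eq_mul]; ring
        have h3 : |Q (0 + 1) - QN N (0 + 1)| = |Q 1 - QN N 1| := by norm_num
        rw [h3]
        linarith
      have hMle : (M' : ℝ) / N ≤ (N : ℝ) ^ (α - 1) := by
        have h1 : (M' : ℝ) ≤ (N : ℝ) ^ α := by
          have ha : ((M : ℕ) : ℝ) ≤ (N : ℝ) ^ α :=
            Nat.floor_le (le_trans zero_le_one hNα1)
          have hb : (M' : ℝ) ≤ (M : ℝ) := by exact_mod_cast (by omega : M' ≤ M)
          linarith
        rw [Real.rpow_sub hN0, Real.rpow_one]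
        exact div_le_div_of_nonneg_right h1 hN0.le |>.trans_eq rfl
      calc (∑' k : ℕ, |Q (k + 1) - QN N (k + 1)|)
          = (∑ k ∈ Finset.range M, |Q (k + 1) - QN N (k + 1)|) + T := by
            rw [hsplitg, htailg]
        _ ≤ ((M' : ℝ) / N + T + (M' : ℝ) / N) + T := by linarith
        _ ≤ 2 * ((N : ℝ) ^ (α - 1) + T) := by linarith
    exact ⟨part1, part2, part3, part4⟩
  refine ⟨key, ?_⟩
  -- convergence
  have h1 : Tendsto (fun N : ℕ => (N : ℝ) ^ (α - 1)) atTop (nhds 0) := by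
    have h := (tendsto_rpow_neg_atTop (y := 1 - α) (by linarith)).comp
      (tendsto_natCast_atTop_atTop (R := ℝ))
    have heq : (fun N : ℕ => ((N : ℝ)) ^ (-(1 - α))) = fun N : ℕ => (N : ℝ) ^ (α - 1) := by
      funext N; congr 1; ring
    rw [← heq]
    exact h
  have h2 : Tendsto (fun N : ℕ => ∑' k : ℕ, Q (k + ⌊(N : ℝ) ^ α⌋₊ + 1)) atTop (nhds 0) := by
    have htail := tendsto_sum_nat_add (fun k : ℕ => Q (k + 1))
    have hfloor : Tendsto (fun N : ℕ => ⌊(N : ℝ) ^ α⌋₊) atTop atTop := by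
      apply tendsto_nat_floor_atTop.comp
      exact (tendsto_rpow_atTop hα0).comp tendsto_natCast_atTop_atTop
    exact htail.comp hfloor
  refine squeeze_zero' (g := fun N : ℕ => 2 * ((N : ℝ) ^ (α - 1) + ∑' k : ℕ, Q (k + ⌊(N : ℝ) ^ α⌋₊ + 1)))
    (Eventually.of_forall fun N => tsum_nonneg fun k => abs_nonneg _)
    ?_ ?_
  · filter_upwards [eventually_ge_atTop 1] with N hN
    exact (key N hN).2.2.2
  · have h := (h1.add h2).const_mul 2
    simpa using h
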